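/- Let X be a real Banach space and Φ : X → ℝ a continuously (Fréchet) differentiable functional such that: (1) Φ(0) = 0 and there exist ρ > 0 and α > 0 with Φ(u) ≥ α for all u with ‖u‖ = ρ; (2) there exists β ∈ X with ‖β‖ > ρ and Φ(β) ≤ 0. Let Γ = {g ∈ C([0,1], X) : g(0) = 0, g(1) = β} and c = inf_{g∈Γ} max_{t∈[0,1]} Φ(g(t)). Then c ≥ α and there exists a sequence (uₙ) in X with Φ(uₙ) → c and Φ′(uₙ) → 0 in the dual space X* as n → ∞. -/

import Mathlib

open Filter Topology unitInterval
noncomputable section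
namespace Paper

/-- A weak form of Ekeland's variational principle. -/
lemma ekeland_weak {Y : Type*} [MetricSpace Y] [CompleteSpace Y]
    (F : Y → ℝ) (hF : Continuous F) (B : ℝ) (hB : ∀ y, B ≤ F y)
    (k : ℝ) (hk : 0 < k) (y₀ : Y) :
    ∃ y : Y, F y ≤ F y₀ ∧ ∀ z : Y, F y ≤ F z + k * dist y z := by
  set T : Y → Set Y := fun y => {z | F z + k * dist y z ≤ F y} with hT
  have hTself : ∀ y, y ∈ T y := fun y => by simp [hT]
  have hTne : ∀ y, (F '' T y).Nonempty := fun y => ⟨F y, y, hTself y, rfl⟩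
  have hTbdd : ∀ y, BddBelow (F '' T y) := fun y =>
    ⟨B, fun r ⟨z, _, hz⟩ => hz ▸ hB z⟩
  have hstep : ∀ (n : ℕ) (y : Y), ∃ z : Y, z ∈ T y ∧
      F z ≤ sInf (F '' T y) + (1/2) ^ n := by
    intro n y
    obtain ⟨r, ⟨z, hzT, rfl⟩, hr⟩ := Real.lt_sInf_add_pos (hTne y)
      (show (0:ℝ) < (1/2)^n by positivity)
    exact ⟨z, hzT, hr.le⟩
  choose next hnextT hnextInf using hstep
  let seq : ℕ → Y := fun n => Nat.rec y₀ (fun n y => next n y) n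
  have hmem : ∀ n, seq (n+1) ∈ T (seq n) := fun n => hnextT n (seq n)
  have hFdec : ∀ n, F (seq (n+1)) ≤ F (seq n) := by
    intro n
    have := hmem n
    simp only [hT, Set.mem_setOf_eq] at this
    nlinarith [dist_nonneg (x := seq n) (y := seq (n+1))]
  have hFanti : Antitone fun n => F (seq n) := antitone_nat_of_succ_le hFdec
  have hchain : ∀ m n, n ≤ m → k * dist (seq n) (seq m) ≤ F (seq n) - F (seq m) := by
    intro m
    induction m with
    | zero => intro n hn; interval_cases n; simp
    | succ m ih =>
      intro n hn
      rcases Nat.lt_or_ge n (m+1) with h | h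
      · have h' : n ≤ m := Nat.lt_succ_iff.mp h
        have h1 := ih n h'
        have h2 := hmem m
        simp only [hT, Set.mem_setOf_eq] at h2
        have h3 : dist (seq n) (seq (m+1)) ≤ dist (seq n) (seq m) + dist (seq m) (seq (m+1)) :=
          dist_triangle _ _ _
        nlinarith
      · have : n = m + 1 := le_antisymm hn h
        subst this; simp
  have hbdd : BddBelow (Set.range fun n => F (seq n)) := ⟨B, fun r ⟨n, hn⟩ => hn ▸ hB _⟩
  have hFtend : Tendsto (fun n => F (seq n)) atTop (𝓝 (⨅ n, F (seq n))) :=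
    tendsto_atTop_ciInf hFanti hbdd
  set L := ⨅ n, F (seq n) with hL
  have hLle : ∀ n, L ≤ F (seq n) := fun n => ciInf_le hbdd n
  have hcauchy : CauchySeq seq := by
    apply cauchySeq_of_le_tendsto_0 (b := fun n => (F (seq n) - L) / k)
    · intro n m N hn hm
      have key : ∀ p q, N ≤ p → p ≤ q → dist (seq p) (seq q) ≤ (F (seq N) - L) / k := by
        intro p q hNp hpq
        rw [le_div_iff₀ hk]
        have h1 := hchain q p hpq
        have h2 : F (seq p) ≤ F (seq N) := hFanti hNp
        have h3 : L ≤ F (seq q) := hLle q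
        nlinarith
      rcases le_total n m with h | h
      · exact key n m hn h
      · rw [dist_comm]; exact key m n hm h
    · have : Tendsto (fun n => (F (seq n) - L) / k) atTop (𝓝 ((L - L) / k)) :=
        ((hFtend.sub_const L).div_const k)
      simpa using this
  obtain ⟨y, hy⟩ := cauchySeq_tendsto_of_complete hcauchy
  have hFy : Tendsto (fun n => F (seq n)) atTop (𝓝 (F y)) :=
    (hF.continuousAt.tendsto).comp hy
  have hFyL : F y = L := tendsto_nhds_unique hFy hFtend
  refine ⟨y, ?_, ?_⟩
  · have : F y = L := hFyL
    have h0 := hLle 0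
    rw [this]; exact h0
  · intro z
    by_contra hcon
    push_neg at hcon
    -- `y ∈ T (seq n)` for every `n`
    have hyT : ∀ n, y ∈ T (seq n) := by
      intro n
      have hclosed : IsClosed (T (seq n)) := by
        have : T (seq n) = {z | F z + k * dist (seq n) z ≤ F (seq n)} := rfl
        rw [this]
        exact isClosed_le (by fun_prop) continuous_const
      refine hclosed.mem_of_tendsto hy ?_
      filter_upwards [eventually_ge_atTop n] with m hm
      have := hchain m n hm
      simp only [hT, Set.mem_setOf_eq]
      linarith
    have hzT : ∀ n, z ∈ T (seq n) := by
      intro n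
      have h1 := hyT n
      simp only [hT, Set.mem_setOf_eq] at h1 ⊢
      have h3 : dist (seq n) z ≤ dist (seq n) y + dist y z := dist_triangle _ _ _
      nlinarith
    have hFz : ∀ n, F (seq (n+1)) ≤ F z + (1/2)^n := by
      intro n
      have h1 : sInf (F '' T (seq n)) ≤ F z := csInf_le (hTbdd _) ⟨z, hzT n, rfl⟩
      have h2 := hnextInf n (seq n)
      calc F (seq (n+1)) ≤ sInf (F '' T (seq n)) + (1/2)^n := h2
        _ ≤ F z + (1/2)^n := by linarith
    have hLz : L ≤ F z := by
      have t1 : Tendsto (fun n => F (seq (n+1))) atTop (𝓝 L) :=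
        hFtend.comp (tendsto_add_atTop_nat 1)
      have t2 : Tendsto (fun n : ℕ => F z + (1/2:ℝ)^n) atTop (𝓝 (F z + 0)) :=
        tendsto_const_nhds.add (tendsto_pow_atTop_nhds_zero_of_lt_one (by norm_num) (by norm_num))
      have := le_of_tendsto_of_tendsto' t1 (by simpa using t2) hFz
      simpa using this
    have : (0:ℝ) ≤ k * dist y z := mul_nonneg hk.le dist_nonneg
    rw [hFyL] at hcon
    linarith

/-- On a nonempty compact space a continuous real function attains its supremum. -/
lemma exists_forall_le_and_csSup {J : Type*} [TopologicalSpace J] [CompactSpace J] [Nonempty J]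
    {f : J → ℝ} (hf : Continuous f) :
    ∃ t, (∀ s, f s ≤ f t) ∧ sSup (Set.range f) = f t := by
  obtain ⟨t, -, h'⟩ := isCompact_univ.exists_isMaxOn Set.univ_nonempty hf.continuousOn
  have h : ∀ s, f s ≤ f t := fun s => h' (Set.mem_univ s)
  exact ⟨t, h, IsGreatest.csSup_eq ⟨Set.mem_range_self t, Set.forall_mem_range.2 h⟩⟩

lemma bddAbove_range_of_compact {J : Type*} [TopologicalSpace J] [CompactSpace J] [Nonempty J]
    {f : J → ℝ} (hf : Continuous f) : BddAbove (Set.range f) := by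
  obtain ⟨t, ht, -⟩ := exists_forall_le_and_csSup hf
  exact ⟨f t, Set.forall_mem_range.2 ht⟩

/-- Continuity of the max-functional `g ↦ max_t Φ(g t)` on `C(J, X)`. -/
lemma continuous_sup_comp {J : Type*} [TopologicalSpace J] [CompactSpace J] [Nonempty J]
    {X : Type*} [MetricSpace X] {Φ : X → ℝ} (hΦ : Continuous Φ) :
    Continuous fun g : C(J, X) => sSup (Set.range fun t => Φ (g t)) := by
  have hone : ∀ q q' : C(J, ℝ), sSup (Set.range ⇑q) ≤ sSup (Set.range ⇑q') + dist q q' := by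
    intro q q'
    obtain ⟨t, ht, hsup⟩ := exists_forall_le_and_csSup q.continuous
    rw [hsup]
    have h1 : q t - q' t ≤ dist q q' := by
      have := ContinuousMap.dist_apply_le_dist (f := q) (g := q') t
      rw [Real.dist_eq] at this
      exact (abs_sub_le_iff.mp this).1.trans_eq rfl |>.trans le_rfl
    have h2 : q' t ≤ sSup (Set.range ⇑q') :=
      le_csSup (bddAbove_range_of_compact q'.continuous) (Set.mem_range_self t)
    linarith
  have hS : LipschitzWith 1 (fun q : C(J, ℝ) => sSup (Set.range ⇑q)) := by
    apply LipschitzWith.of_dist_le_mul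
    intro q q'
    rw [Real.dist_eq, NNReal.coe_one, one_mul, abs_sub_le_iff]
    have h1 := hone q q'
    have h2 := hone q' q
    rw [dist_comm] at h2
    constructor <;> linarith
  have : (fun g : C(J, X) => sSup (Set.range fun t => Φ (g t)))
      = (fun q : C(J, ℝ) => sSup (Set.range ⇑q)) ∘
        (fun g : C(J, X) => (⟨Φ, hΦ⟩ : C(X, ℝ)).comp g) := rfl
  rw [this]
  exact hS.continuous.comp (ContinuousMap.continuous_postcomp _)

set_option maxHeartbeats 1000000 in
/-- The key step: existence of an almost-critical point at level `c`. -/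
lemma almost_critical {X : Type*} [NormedAddCommGroup X] [NormedSpace ℝ X] [CompleteSpace X]
    (Φ : X → ℝ) (Φ' : X → X →L[ℝ] ℝ)
    (hdiff : ∀ x, HasFDerivAt Φ (Φ' x) x) (hcont : Continuous Φ')
    (hΦ0 : Φ 0 = 0) (β : X) (hΦβ : Φ β ≤ 0) (c : ℝ) (hcpos : 0 < c)
    (hcle : ∀ g : C(unitInterval, X), g 0 = 0 → g 1 = β →
      c ≤ sSup (Set.range fun t => Φ (g t)))
    (hcinf : ∀ η, 0 < η → ∃ g : C(unitInterval, X), g 0 = 0 ∧ g 1 = β ∧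
      sSup (Set.range fun t => Φ (g t)) < c + η)
    (ε : ℝ) (hε : 0 < ε) :
    ∃ u : X, |Φ u - c| ≤ ε ∧ ‖Φ' u‖ ≤ ε := by
  set ε3 : ℝ := ε/3 with hε3def
  have hε3pos : 0 < ε3 := by positivity
  have hΦc : Continuous Φ := continuous_iff_continuousAt.2 fun x => (hdiff x).continuousAt
  set Γ : Set C(unitInterval, X) := {g | g 0 = 0 ∧ g 1 = β} with hΓdef
  have hΓc : IsClosed Γ := by
    have : Γ = ((fun g : C(unitInterval, X) => g 0) ⁻¹' {0}) ∩
        ((fun g : C(unitInterval, X) => g 1) ⁻¹' {β}) := rfl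
    rw [this]
    exact (isClosed_singleton.preimage (continuous_eval_const (0 : unitInterval))).inter
      (isClosed_singleton.preimage (continuous_eval_const (1 : unitInterval)))
  haveI : CompleteSpace Γ := hΓc.completeSpace_coe
  set F : Γ → ℝ := fun gp => sSup (Set.range fun t => Φ (gp.1 t)) with hFdef
  have hFcont : Continuous F := (continuous_sup_comp hΦc).comp continuous_subtype_val
  have hFlb : ∀ y : Γ, c ≤ F y := fun y => hcle y.1 y.2.1 y.2.2
  obtain ⟨g₁, hg10, hg11, hg1F⟩ := hcinf ε hε
  obtain ⟨y, hyle, hEk⟩ := ekeland_weak F hFcont c hFlb (ε3/4) (by positivity)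
    ⟨g₁, hg10, hg11⟩
  set g : C(unitInterval, X) := y.1 with hgdef
  set Fg : ℝ := F y with hFgdef
  have hg0 : g 0 = 0 := y.2.1
  have hg1 : g 1 = β := y.2.2
  have hFgub : Fg < c + ε := lt_of_le_of_lt hyle hg1F
  have hFglb : c ≤ Fg := hFlb y
  have hgcont : Continuous fun t => Φ (g t) := hΦc.comp g.continuous
  have hle_sup : ∀ s, Φ (g s) ≤ Fg := fun s =>
    le_csSup (bddAbove_range_of_compact hgcont) (Set.mem_range_self s)
  obtain ⟨tmax, htmax, hsupeq⟩ := exists_forall_le_and_csSup hgcont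
  have hFgmax : Fg = Φ (g tmax) := hsupeq
  rcases em (∃ t, Fg ≤ Φ (g t) ∧ ‖Φ' (g t)‖ ≤ ε) with ⟨t, ht1, ht2⟩ | hbad
  · refine ⟨g t, ?_, ht2⟩
    have h1 : Φ (g t) ≤ Fg := hle_sup t
    have h2 : Φ (g t) = Fg := le_antisymm h1 ht1
    rw [abs_le]
    constructor <;> [linarith; linarith]
  exfalso
  push_neg at hbad
  set M : Set unitInterval := {t | Fg ≤ Φ (g t)} with hMdef
  have hMclosed : IsClosed M := isClosed_le continuous_const hgcont
  -- choose descent directions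
  have hvs : ∀ t : unitInterval, t ∈ M → ∃ v : X, ‖v‖ ≤ 1 ∧ Φ' (g t) v < -(2*ε3) := by
    intro t ht
    have h1 : ε < ‖Φ' (g t)‖ := hbad t ht
    obtain ⟨x, hx1, hx2⟩ := (Φ' (g t)).exists_lt_apply_of_lt_opNorm h1
    rw [Real.norm_eq_abs] at hx2
    have hεlt : 2*ε3 < ε := by rw [hε3def]; linarith
    rcases le_or_gt (Φ' (g t) x) 0 with h | h
    · refine ⟨x, hx1.le, ?_⟩
      rw [abs_of_nonpos h] at hx2
      linarith
    · refine ⟨-x, by simpa using hx1.le, ?_⟩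
      rw [abs_of_pos h] at hx2
      rw [map_neg]
      linarith
  choose v hv1 hv2 using hvs
  -- the open cover of M
  set U : M → Set unitInterval :=
    fun i => {s | Φ' (g s) (v i.1 i.2) < -(2*ε3) ∧ 0 < Φ (g s)} with hUdef
  have hUopen : ∀ i, IsOpen (U i) := by
    intro i
    apply IsOpen.inter
    · exact isOpen_lt ((hcont.comp g.continuous).clm_apply continuous_const) continuous_const
    · exact isOpen_lt continuous_const hgcont
  have hMcover : M ⊆ ⋃ i, U i := by
    intro t ht
    exact Set.mem_iUnion.2 ⟨⟨t, ht⟩, hv2 t ht, lt_of_lt_of_le hcpos (le_trans hFglb ht)⟩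
  obtain ⟨pu, hpu⟩ := PartitionOfUnity.exists_isSubordinate hMclosed U hUopen hMcover
  set V : M → X := fun i => v i.1 i.2 with hVdef
  set w : unitInterval → X := fun s => ∑ᶠ i, pu i s • V i with hwdef
  have hwcont : Continuous w := pu.continuous_finsum_smul fun i x _ => continuousAt_const
  set sig : unitInterval → ℝ := fun s => ∑ᶠ i, pu i s with hsigdef
  have hsigcont : Continuous sig := by
    have h1 : Continuous fun s => ∑ᶠ i, pu i s • (1:ℝ) :=
      pu.continuous_finsum_smul fun i x _ => continuousAt_const
    simpa [smul_eq_mul] using h1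
  have hwsum : ∀ s, w s = ∑ i ∈ pu.finsupport s, pu i s • V i := by
    intro s
    exact (pu.sum_finsupport_smul_eq_finsum (x₀ := s) fun i _ => V i).symm
  have hsigsum : ∀ s, sig s = ∑ i ∈ pu.finsupport s, pu i s := by
    intro s
    change ∑ᶠ i, (pu i) s = _
    exact finsum_eq_sum_of_support_subset _ (pu.coe_finsupport s).superset
  have hsig1 : ∀ s, sig s ≤ 1 := pu.sum_le_one'
  have hsigM : ∀ s ∈ M, sig s = 1 := pu.sum_eq_one'
  have hsignn : ∀ s, 0 ≤ sig s := by
    intro s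
    rw [hsigsum]
    exact Finset.sum_nonneg fun i _ => pu.nonneg' i s
  have hwnorm : ∀ s, ‖w s‖ ≤ sig s := by
    intro s
    rw [hwsum, hsigsum]
    refine (norm_sum_le _ _).trans (Finset.sum_le_sum fun i _ => ?_)
    have hn : ‖pu i s • V i‖ = pu i s * ‖V i‖ := by
      rw [norm_smul, Real.norm_eq_abs]
      congr 1
      exact abs_of_nonneg (pu.nonneg' i s)
    rw [hn]
    calc pu i s * ‖V i‖ ≤ pu i s * 1 :=
          mul_le_mul_of_nonneg_left (hv1 i.1 i.2) (pu.nonneg' i s)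
      _ = pu i s := mul_one _
  have hwnorm1 : ∀ s, ‖w s‖ ≤ 1 := fun s => (hwnorm s).trans (hsig1 s)
  have hsupp : ∀ (i : M) (s : unitInterval), pu i s ≠ 0 → s ∈ U i := by
    intro i s hne
    exact hpu i (subset_tsupport _ hne)
  have hwder : ∀ s, Φ' (g s) (w s) ≤ -(2*ε3) * sig s := by
    intro s
    rw [hwsum, hsigsum, map_sum, Finset.mul_sum]
    refine Finset.sum_le_sum fun i _ => ?_
    rcases eq_or_ne (pu i s) 0 with h | h
    · simp [h]
    · have hU := (hsupp i s h).1
      rw [map_smul, smul_eq_mul]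
      calc pu i s * Φ' (g s) (V i) ≤ pu i s * (-(2*ε3)) :=
            mul_le_mul_of_nonneg_left hU.le (pu.nonneg' i s)
        _ = -(2*ε3) * pu i s := by ring
  have hpu0 : ∀ i : M, pu i 0 = 0 := by
    intro i
    by_contra h
    have := (hsupp i 0 h).2
    rw [hg0, hΦ0] at this
    exact lt_irrefl 0 this
  have hpu1 : ∀ i : M, pu i 1 = 0 := by
    intro i
    by_contra h
    have := (hsupp i 1 h).2
    rw [hg1] at this
    linarith
  have hw0 : w 0 = 0 := by
    rw [hwdef]
    simp only [hpu0, zero_smul]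
    exact finsum_zero
  have hw1 : w 1 = 0 := by
    rw [hwdef]
    simp only [hpu1, zero_smul]
    exact finsum_zero
  -- constants
  obtain ⟨s₀, hs₀, -⟩ := exists_forall_le_and_csSup (hcont.comp g.continuous).norm
  set C₀ : ℝ := ‖Φ' (g s₀)‖ + 1 with hC₀def
  have hC₀ : ∀ s, ‖Φ' (g s)‖ ≤ C₀ := fun s => (hs₀ s).trans (by simp [hC₀def])
  have hC₀pos : 0 < C₀ := by positivity
  -- the compact tube and uniform continuity of Φ' on it
  set K : Set X := (fun p : unitInterval × ℝ => g p.1 + p.2 • w p.1) ''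
    (Set.univ ×ˢ Set.Icc 0 1) with hKdef
  have hKcomp : IsCompact K := (isCompact_univ.prod isCompact_Icc).image
    ((g.continuous.comp continuous_fst).add (continuous_snd.smul (hwcont.comp continuous_fst)))
  have hUC : UniformContinuousOn Φ' K := hKcomp.uniformContinuousOn_of_continuous
    hcont.continuousOn
  rw [Metric.uniformContinuousOn_iff] at hUC
  obtain ⟨δ, hδpos, hδ⟩ := hUC ε3 hε3pos
  -- the gap constant
  obtain ⟨gap, hgappos, hgapC⟩ : ∃ gap : ℝ, 0 < gap ∧
      ∀ s : unitInterval, sig s ≤ 3/4 → Φ (g s) ≤ Fg - gap := by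
    set Cset : Set unitInterval := {s | sig s ≤ 3/4} with hCsetdef
    rcases Cset.eq_empty_or_nonempty with h | h
    · exact ⟨1, one_pos, fun s hs => absurd (h ▸ (show s ∈ Cset from hs)) (Set.notMem_empty s)⟩
    · have hCc : IsCompact Cset := (isClosed_le hsigcont continuous_const).isCompact
      obtain ⟨s₁, hs₁C, hs₁max⟩ := hCc.exists_isMaxOn h hgcont.continuousOn
      have h1 : Φ (g s₁) ≤ Fg := hle_sup s₁
      have h2 : Φ (g s₁) ≠ Fg := by
        intro heq
        have hmem : s₁ ∈ M := by rw [hMdef]; exact Set.mem_setOf_eq ▸ heq.ge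
        have := hsigM s₁ hmem
        have := hs₁C
        rw [hCsetdef] at this
        simp only [Set.mem_setOf_eq] at this
        linarith [hsigM s₁ hmem]
      refine ⟨Fg - Φ (g s₁), by cases h1.lt_or_eq with
        | inl h => linarith
        | inr h => exact absurd h h2, fun s hs => ?_⟩
      have := hs₁max hs
      simp only [Set.mem_setOf_eq] at this ⊢
      linarith [hs₁max (show s ∈ Cset from hs)]
  set lam : ℝ := min (δ/2) (min (1/2) (gap/(2*(C₀+ε3)))) with hlamdef
  have hlampos : 0 < lam := by
    apply lt_min (by positivity) (lt_min (by norm_num) (by positivity))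
  have hlamδ : lam ≤ δ/2 := min_le_left _ _
  have hlam1 : lam ≤ 1/2 := (min_le_right _ _).trans (min_le_left _ _)
  have hlamgap : lam ≤ gap/(2*(C₀+ε3)) := (min_le_right _ _).trans (min_le_right _ _)
  have hlamgap' : lam * (2*(C₀+ε3)) ≤ gap := by
    rwa [le_div_iff₀ (by positivity)] at hlamgap
  -- uniform perturbation bound on the derivative
  have hpert : ∀ (s : unitInterval) (τ : ℝ), τ ∈ Set.Icc 0 lam →
      ‖Φ' (g s + τ • w s) - Φ' (g s)‖ ≤ ε3 := by
    intro s τ hτ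
    have hx : g s + τ • w s ∈ K :=
      ⟨(s, τ), ⟨trivial, hτ.1, hτ.2.trans (by linarith)⟩, rfl⟩
    have hy : g s ∈ K := ⟨(s, 0), ⟨trivial, le_refl 0, by norm_num⟩, by simp⟩
    have hdist : dist (g s + τ • w s) (g s) < δ := by
      rw [dist_eq_norm, add_sub_cancel_left, norm_smul, Real.norm_eq_abs,
        abs_of_nonneg hτ.1]
      calc τ * ‖w s‖ ≤ τ * 1 := mul_le_mul_of_nonneg_left (hwnorm1 s) hτ.1
        _ = τ := mul_one τ
        _ ≤ lam := hτ.2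
        _ < δ := by linarith
    have := hδ _ hx _ hy hdist
    rw [dist_eq_norm] at this
    exact this.le
  -- pointwise mean value estimate
  have hpt : ∀ s, Φ (g s + lam • w s) ≤ Φ (g s) + lam * (Φ' (g s) (w s) + ε3) := by
    intro s
    set ψ : ℝ → ℝ := fun τ => Φ (g s + τ • w s) with hψdef
    have hψd : ∀ τ : ℝ, HasDerivAt ψ (Φ' (g s + τ • w s) (w s)) τ := by
      intro τ
      have hcurve : HasDerivAt (fun τ : ℝ => g s + τ • w s) (w s) τ := by
        simpa using ((hasDerivAt_id τ).smul_const (w s)).const_add (g s)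
      exact (hdiff _).comp_hasDerivAt τ hcurve
    obtain ⟨τ, hτmem, hτeq⟩ := exists_hasDerivAt_eq_slope ψ
      (fun τ => Φ' (g s + τ • w s) (w s)) hlampos
      (fun τ _ => (hψd τ).continuousAt.continuousWithinAt) (fun τ _ => hψd τ)
    rw [sub_zero, eq_div_iff hlampos.ne'] at hτeq
    have h2 : Φ' (g s + τ • w s) (w s) ≤ Φ' (g s) (w s) + ε3 := by
      have h3 := hpert s τ ⟨hτmem.1.le, hτmem.2.le⟩
      have h4 : (Φ' (g s + τ • w s) - Φ' (g s)) (w s) ≤ ε3 * 1 := by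
        calc (Φ' (g s + τ • w s) - Φ' (g s)) (w s)
            ≤ ‖(Φ' (g s + τ • w s) - Φ' (g s)) (w s)‖ := le_abs_self _
          _ ≤ ‖Φ' (g s + τ • w s) - Φ' (g s)‖ * ‖w s‖ :=
              ContinuousLinearMap.le_opNorm _ _
          _ ≤ ε3 * 1 := mul_le_mul h3 (hwnorm1 s) (norm_nonneg _) hε3pos.le
      rw [ContinuousLinearMap.sub_apply] at h4
      linarith
    have hψ0 : ψ 0 = Φ (g s) := by simp [hψdef]
    have hψlam : ψ lam = Φ (g s + lam • w s) := rfl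
    nlinarith [mul_le_mul_of_nonneg_left h2 hlampos.le]
  -- the deformed path
  set h2p : C(unitInterval, X) :=
    ⟨fun s => g s + lam • w s, g.continuous.add (continuous_const.smul hwcont)⟩ with hh2pdef
  have hh2Γ : h2p ∈ Γ := by
    constructor
    · show g 0 + lam • w 0 = 0
      rw [hg0, hw0, smul_zero, add_zero]
    · show g 1 + lam • w 1 = β
      rw [hg1, hw1, smul_zero, add_zero]
  set z : Γ := ⟨h2p, hh2Γ⟩ with hzdef
  have hdistyz : dist y z ≤ lam := by
    rw [Subtype.dist_eq]
    rw [ContinuousMap.dist_le hlampos.le]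
    intro s
    show dist (g s) (h2p s) ≤ lam
    rw [dist_eq_norm]
    show ‖g s - (g s + lam • w s)‖ ≤ lam
    rw [sub_add_cancel_left, norm_neg, norm_smul, Real.norm_eq_abs, abs_of_nonneg hlampos.le]
    calc lam * ‖w s‖ ≤ lam * 1 := mul_le_mul_of_nonneg_left (hwnorm1 s) hlampos.le
      _ = lam := mul_one _
  -- the crucial decrease of the max-value
  have hFz : F z ≤ Fg - min (gap/2) (lam*ε3/2) := by
    have : F z = sSup (Set.range fun t => Φ (h2p t)) := rfl
    rw [this]
    apply csSup_le (Set.range_nonempty _)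
    rintro r ⟨s, rfl⟩
    show Φ (h2p s) ≤ Fg - min (gap/2) (lam*ε3/2)
    have hps : Φ (h2p s) ≤ Φ (g s) + lam * (Φ' (g s) (w s) + ε3) := hpt s
    rcases le_or_gt (sig s) (3/4) with hsigs | hsigs
    · have h5 := hgapC s hsigs
      have h6 : Φ' (g s) (w s) ≤ C₀ := by
        calc Φ' (g s) (w s) ≤ ‖Φ' (g s) (w s)‖ := le_abs_self _
          _ ≤ ‖Φ' (g s)‖ * ‖w s‖ := ContinuousLinearMap.le_opNorm _ _
          _ ≤ C₀ * 1 := mul_le_mul (hC₀ s) (hwnorm1 s) (norm_nonneg _) hC₀pos.le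
          _ = C₀ := mul_one _
      have h7 : lam * (C₀ + ε3) ≤ gap/2 := by nlinarith
      have hmin : min (gap/2) (lam*ε3/2) ≤ gap/2 := min_le_left _ _
      nlinarith [mul_le_mul_of_nonneg_left (show Φ' (g s) (w s) + ε3 ≤ C₀ + ε3 by linarith)
        hlampos.le]
    · have h8 := hwder s
      have h9 : Φ' (g s) (w s) + ε3 ≤ -(ε3/2) := by nlinarith
      have hmin : min (gap/2) (lam*ε3/2) ≤ lam*ε3/2 := min_le_right _ _
      have h10 := hle_sup s
      nlinarith [mul_le_mul_of_nonneg_left h9 hlampos.le]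
  -- contradiction with the Ekeland inequality
  have hEk2 := hEk z
  have hmin : (ε3/4) * lam < min (gap/2) (lam*ε3/2) := by
    have hp1 : ε3/4 < C₀ + ε3 := by linarith
    have hp2 : (ε3/4) * lam < (C₀ + ε3) * lam := mul_lt_mul_of_pos_right hp1 hlampos
    have hring : lam * (2*(C₀+ε3)) = 2*((C₀+ε3)*lam) := by ring
    have hp3 : (C₀ + ε3) * lam ≤ gap / 2 := by nlinarith [hlamgap']
    have hp4 : (ε3/4) * lam < lam*ε3/2 := by
      have hpos : 0 < lam * ε3 := mul_pos hlampos hε3pos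
      calc (ε3/4) * lam = (lam*ε3)/4 := by ring
        _ < (lam*ε3)/2 := by linarith
        _ = lam*ε3/2 := by ring
    exact lt_min (hp2.trans_le hp3) hp4
  have hd : (ε3/4) * dist y z ≤ (ε3/4) * lam :=
    mul_le_mul_of_nonneg_left hdistyz (by positivity)
  have : Fg ≤ Fg - min (gap/2) (lam*ε3/2) + (ε3/4) * lam := by
    calc Fg = F y := hFgdef
      _ ≤ F z + (ε3/4) * dist y z := hEk2
      _ ≤ Fg - min (gap/2) (lam*ε3/2) + (ε3/4) * lam := by linarith
  linarith

theorem mountain_pass_palais_smale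
    {X : Type*} [NormedAddCommGroup X] [NormedSpace ℝ X] [CompleteSpace X]
    (Φ : X → ℝ) (Φ' : X → X →L[ℝ] ℝ)
    (hdiff : ∀ x, HasFDerivAt Φ (Φ' x) x) (hcont : Continuous Φ')
    (hΦ0 : Φ 0 = 0) (ρ α : ℝ) (hρ : 0 < ρ) (hα : 0 < α)
    (hsphere : ∀ u : X, ‖u‖ = ρ → α ≤ Φ u)
    (β : X) (hβ : ρ < ‖β‖) (hΦβ : Φ β ≤ 0)
    (c : ℝ)
    (hc : c = sInf {y | ∃ g : C(unitInterval, X),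
      g 0 = 0 ∧ g 1 = β ∧ y = sSup (Set.range fun t => Φ (g t))}) :
    α ≤ c ∧ ∃ u : ℕ → X,
      Tendsto (fun n => Φ (u n)) atTop (𝓝 c) ∧
      Tendsto (fun n => ‖Φ' (u n)‖) atTop (𝓝 0) := by
  have hΦc : Continuous Φ := continuous_iff_continuousAt.2 fun x => (hdiff x).continuousAt
  set S : Set ℝ := {y | ∃ g : C(unitInterval, X),
      g 0 = 0 ∧ g 1 = β ∧ y = sSup (Set.range fun t => Φ (g t))} with hS
  -- every admissible path passes through the sphere of radius ρ
  have hlow : ∀ g : C(unitInterval, X), g 0 = 0 → g 1 = β →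
      α ≤ sSup (Set.range fun t => Φ (g t)) := by
    intro g h0 h1
    have hIVT : Set.Icc (‖g 0‖) (‖g 1‖) ⊆ Set.range fun t => ‖g t‖ :=
      intermediate_value_univ (0 : unitInterval) 1 g.continuous.norm
    have hmem : ρ ∈ Set.Icc (‖g 0‖) (‖g 1‖) := by
      rw [h0, h1]; simpa using ⟨hρ.le, hβ.le⟩
    obtain ⟨t, ht⟩ := hIVT hmem
    calc α ≤ Φ (g t) := hsphere _ ht
      _ ≤ _ := le_csSup (bddAbove_range_of_compact (hΦc.comp g.continuous))
        (Set.mem_range_self t)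
  -- the straight path shows S is nonempty
  have hSne : S.Nonempty := by
    refine ⟨sSup (Set.range fun t : unitInterval => Φ ((t : ℝ) • β)),
      ⟨fun t : unitInterval => (t : ℝ) • β, continuous_subtype_val.smul continuous_const⟩,
      ?_, ?_, rfl⟩
    · simp
    · simp
  have hαc : α ≤ c := by
    rw [hc]
    exact le_csInf hSne (fun y ⟨g, h0, h1, hy⟩ => hy ▸ hlow g h0 h1)
  have hcpos : 0 < c := lt_of_lt_of_le hα hαc
  have hSbdd : BddBelow S := ⟨α, fun y ⟨g, h0, h1, hy⟩ => hy ▸ hlow g h0 h1⟩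
  have hcle : ∀ g : C(unitInterval, X), g 0 = 0 → g 1 = β →
      c ≤ sSup (Set.range fun t => Φ (g t)) := by
    intro g h0 h1
    rw [hc]
    exact csInf_le hSbdd ⟨g, h0, h1, rfl⟩
  have hcinf : ∀ η, 0 < η → ∃ g : C(unitInterval, X), g 0 = 0 ∧ g 1 = β ∧
      sSup (Set.range fun t => Φ (g t)) < c + η := by
    intro η hη
    obtain ⟨y, ⟨g, h0, h1, hy⟩, hlt⟩ := Real.lt_sInf_add_pos hSne hη
    exact ⟨g, h0, h1, by rw [← hy, ← hc] at *; exact hy ▸ hlt⟩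
  refine ⟨hαc, ?_⟩
  have key : ∀ n : ℕ, ∃ u : X, |Φ u - c| ≤ 1/(n+1) ∧ ‖Φ' u‖ ≤ 1/(n+1) := fun n =>
    almost_critical Φ Φ' hdiff hcont hΦ0 β hΦβ c hcpos hcle hcinf (1/(n+1)) (by positivity)
  choose u hu1 hu2 using key
  have t0 : Tendsto (fun n : ℕ => 1/((n:ℝ)+1)) atTop (𝓝 0) :=
    tendsto_one_div_add_atTop_nhds_zero_nat
  refine ⟨u, ?_, ?_⟩
  · have h1 : Tendsto (fun n => Φ (u n) - c) atTop (𝓝 0) :=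
      squeeze_zero_norm (fun n => hu1 n) t0
    have := h1.add_const c
    simpa using this
  · exact squeeze_zero (fun n => norm_nonneg _) hu2 t0
end Paper
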